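/- Let n, m be positive integers, let (θ_i) and (θ'_i) be orthonormal families in ℂ^{2^m}, and let r ↦ (j_r, i_r) be an injective map from Fin (2^n) to Fin (2^n) × Fin (2^m). Then there exist unitaries U_A and U_B on ℂ^{2^n} ⊗ ℂ^{2^m} such that U_A(e_r ⊗ e_1) = e_{j_r} ⊗ θ_{i_r} and U_B(e_r ⊗ e_1) = e_{j_r} ⊗ θ'_{i_r} for all r, and consequently (U_A ⊗ U_B)(Φ(μ_n ⊗ e_1 ⊗ e_1)) = (1/C_n) ∑_{r=1}^{2^n} (1/√r) · (e_{j_r} ⊗ θ_{i_r}) ⊗ (e_{j_r} ⊗ θ'_{i_r}), where Φ is the canonical unitary reordering of tensor factors from (ℂ^{2^n} ⊗ ℂ^{2^n}) ⊗ (ℂ^{2^m} ⊗ ℂ^{2^m}) to (ℂ^{2^n} ⊗ ℂ^{2^m}) ⊗ (ℂ^{2^n} ⊗ ℂ^{2^m}). -/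

import Mathlib

/-- Tensor product of vectors, in the function model of the tensor product of
Euclidean spaces: `(x ⊗ y) (a, b) = x a * y b`. -/
noncomputable def tens {ι κ : Type*} (x : EuclideanSpace ℂ ι) (y : EuclideanSpace ℂ κ) :
    EuclideanSpace ℂ (ι × κ) :=
  WithLp.toLp 2 (fun p : ι × κ => x p.1 * y p.2)

/-- `C_n = √ (∑_{j=1}^{2^n} 1/j)` (here `j : Fin (2^n)` represents the integer `j + 1`). -/
noncomputable def Cconst (n : ℕ) : ℝ := Real.sqrt (∑ j : Fin (2 ^ n), 1 / ((j : ℝ) + 1))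

/-- The van Dam–Hayden embezzlement state
`μ_n = (1/C_n) ∑_{j=1}^{2^n} (1/√j) e_j ⊗ e_j` on `ℂ^{2^n} ⊗ ℂ^{2^n}`. -/
noncomputable def embezState (n : ℕ) : EuclideanSpace ℂ (Fin (2 ^ n) × Fin (2 ^ n)) :=
  ∑ j : Fin (2 ^ n), ((1 / (Cconst n * Real.sqrt ((j : ℝ) + 1)) : ℝ) : ℂ) •
    tens (EuclideanSpace.single j 1) (EuclideanSpace.single j 1)

/-- The canonical unitary reordering `Φ` of tensor factors, from
`(ℂ^a ⊗ ℂ^b) ⊗ (ℂ^c ⊗ ℂ^d)` to `(ℂ^a ⊗ ℂ^c) ⊗ (ℂ^b ⊗ ℂ^d)`, in the function model. -/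
noncomputable def reorder {a b c d : Type*}
    (v : EuclideanSpace ℂ ((a × b) × (c × d))) :
    EuclideanSpace ℂ ((a × c) × (b × d)) :=
  WithLp.toLp 2 (fun p : (a × c) × (b × d) => v ((p.1.1, p.2.1), (p.1.2, p.2.2)))

/-- The tensor (Kronecker) product `A ⊗ B` of two operators, acting on the function model
of the tensor product: `(A ⊗ B) v (p₁, p₂) = ∑_q (A e_{q₁}) p₁ * (B e_{q₂}) p₂ * v q`. -/
noncomputable def kron {ι κ : Type*} [Fintype ι] [Fintype κ] [DecidableEq ι] [DecidableEq κ]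
    (A : EuclideanSpace ℂ ι ≃ₗᵢ[ℂ] EuclideanSpace ℂ ι)
    (B : EuclideanSpace ℂ κ ≃ₗᵢ[ℂ] EuclideanSpace ℂ κ)
    (v : EuclideanSpace ℂ (ι × κ)) : EuclideanSpace ℂ (ι × κ) :=
  WithLp.toLp 2 (fun p : ι × κ => ∑ q : ι × κ,
    A (EuclideanSpace.single q.1 1) p.1 * B (EuclideanSpace.single q.2 1) p.2 * v q)


lemma es_sum_apply {ι A : Type*} (s : Finset A) (f : A → EuclideanSpace ℂ ι) (p : ι) :
    (∑ i ∈ s, f i) p = ∑ i ∈ s, f i p := by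
  induction s using Finset.cons_induction with
  | empty => rfl
  | cons a s ha ih => rw [Finset.sum_cons, Finset.sum_cons, ← ih]; rfl

lemma tens_apply {ι κ : Type*} (x : EuclideanSpace ℂ ι) (y : EuclideanSpace ℂ κ) (p : ι × κ) :
    tens x y p = x p.1 * y p.2 := rfl

lemma tens_single_single {ι κ : Type*} [DecidableEq ι] [DecidableEq κ] (a : ι) (b : κ) :
    tens (EuclideanSpace.single a (1:ℂ)) (EuclideanSpace.single b 1) =
      EuclideanSpace.single (a, b) 1 := by
  ext p
  rw [tens_apply]
  by_cases h1 : p.1 = a <;> by_cases h2 : p.2 = b <;>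
    simp [EuclideanSpace.single_apply, Prod.ext_iff, h1, h2]

lemma inner_tens {ι κ : Type*} [Fintype ι] [Fintype κ]
    (x x' : EuclideanSpace ℂ ι) (y y' : EuclideanSpace ℂ κ) :
    (inner ℂ (tens x y) (tens x' y') : ℂ) = (inner ℂ x x' : ℂ) * (inner ℂ y y' : ℂ) := by
  simp only [PiLp.inner_apply, RCLike.inner_apply]
  rw [Fintype.sum_prod_type, Finset.sum_mul_sum]
  refine Finset.sum_congr rfl fun i _ => Finset.sum_congr rfl fun j _ => ?_
  rw [tens_apply, tens_apply, map_mul]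
  ring

lemma orthonormal_prod_family {N M K ν : Type*} [Fintype N] [Fintype M] [DecidableEq K]
    [DecidableEq N] [DecidableEq ν]
    (θ : K → EuclideanSpace ℂ M) (hθ : Orthonormal ℂ θ)
    (f : ν → N × K) (hf : Function.Injective f) :
    Orthonormal ℂ (fun r => tens (EuclideanSpace.single (f r).1 (1:ℂ)) (θ (f r).2)) := by
  rw [orthonormal_iff_ite]
  intro r s
  rw [inner_tens]
  have h1 : (inner ℂ (EuclideanSpace.single (f r).1 (1:ℂ)) (EuclideanSpace.single (f s).1 (1:ℂ)) : ℂ)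
      = if (f r).1 = (f s).1 then 1 else 0 := by
    by_cases h : (f r).1 = (f s).1 <;>
      simp [EuclideanSpace.inner_single_left, EuclideanSpace.single_apply, h, eq_comm]
  rw [h1, orthonormal_iff_ite.mp hθ]
  by_cases h : r = s
  · subst h; simp
  · have hfs : f r ≠ f s := fun c => h (hf c)
    rw [if_neg h]
    by_cases h2 : (f r).1 = (f s).1
    · have h3 : (f r).2 ≠ (f s).2 := fun c => hfs (Prod.ext h2 c)
      simp [h2, h3]
    · simp [h2]

lemma exists_unitary_single {N M : Type*} [Fintype N] [Fintype M] [DecidableEq N] [DecidableEq M]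
    (z : M) (g : N → EuclideanSpace ℂ (N × M)) (hg : Orthonormal ℂ g) :
    ∃ U : EuclideanSpace ℂ (N × M) ≃ₗᵢ[ℂ] EuclideanSpace ℂ (N × M),
      ∀ r, U (EuclideanSpace.single (r, z) 1) = g r := by
  set s : Set (N × M) := Set.range (fun r => (r, z)) with hs
  have hres : Orthonormal ℂ (s.restrict (fun q => g q.1)) := by
    have hinj : Function.Injective (fun q : ↥s => q.1.1) := by
      rintro ⟨q, r, hr⟩ ⟨q', r', hr'⟩ h
      subst hr; subst hr'
      simp only at h
      simp [h]
    exact hg.comp _ hinj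
  obtain ⟨b, hb⟩ := hres.exists_orthonormalBasis_extension_of_card_eq (by simp)
  refine ⟨b.repr.symm, fun r => ?_⟩
  rw [OrthonormalBasis.repr_symm_single]
  exact hb (r, z) ⟨r, rfl⟩

lemma kron_key (n m : ℕ)
    (UA UB : EuclideanSpace ℂ (Fin (2^n) × Fin (2^m)) ≃ₗᵢ[ℂ]
      EuclideanSpace ℂ (Fin (2^n) × Fin (2^m)))
    (gA gB : Fin (2^n) → EuclideanSpace ℂ (Fin (2^n) × Fin (2^m)))
    (hA : ∀ r, UA (EuclideanSpace.single (r, (0:Fin (2^m))) 1) = gA r)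
    (hB : ∀ r, UB (EuclideanSpace.single (r, (0:Fin (2^m))) 1) = gB r) :
    kron UA UB (reorder (tens (embezState n)
        (tens (EuclideanSpace.single (0 : Fin (2^m)) 1)
          (EuclideanSpace.single (0 : Fin (2^m)) 1)))) =
      ∑ r : Fin (2^n), ((1 / (Cconst n * Real.sqrt ((r : ℝ) + 1)) : ℝ) : ℂ) •
        tens (gA r) (gB r) := by
  set c : Fin (2^n) → ℂ := fun j => ((1 / (Cconst n * Real.sqrt ((j:ℝ)+1)) : ℝ) : ℂ) with hc
  have hw : ∀ q : (Fin (2^n) × Fin (2^m)) × (Fin (2^n) × Fin (2^m)),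
      reorder (tens (embezState n)
        (tens (EuclideanSpace.single (0:Fin (2^m)) 1) (EuclideanSpace.single (0:Fin (2^m)) 1))) q
      = ∑ j : Fin (2^n),
          c j * (if q = ((j,(0:Fin (2^m))),(j,(0:Fin (2^m)))) then 1 else 0) := by
    intro q
    show embezState n (q.1.1, q.2.1) *
        ((EuclideanSpace.single (0:Fin (2^m)) (1:ℂ)) q.1.2 *
          (EuclideanSpace.single (0:Fin (2^m)) (1:ℂ)) q.2.2) = _
    rw [embezState, es_sum_apply, Finset.sum_mul]
    refine Finset.sum_congr rfl fun j _ => ?_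
    show c j * ((EuclideanSpace.single j (1:ℂ)) q.1.1 * (EuclideanSpace.single j (1:ℂ)) q.2.1) *
        ((EuclideanSpace.single (0:Fin (2^m)) (1:ℂ)) q.1.2 *
          (EuclideanSpace.single (0:Fin (2^m)) (1:ℂ)) q.2.2) = _
    by_cases h1 : q.1.1 = j <;> by_cases h2 : q.2.1 = j <;>
      by_cases h3 : q.1.2 = (0:Fin (2^m)) <;> by_cases h4 : q.2.2 = (0:Fin (2^m)) <;>
      simp [EuclideanSpace.single_apply, Prod.ext_iff, h1, h2, h3, h4]
  ext p
  rw [es_sum_apply]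
  show (∑ q : (Fin (2^n) × Fin (2^m)) × (Fin (2^n) × Fin (2^m)),
      UA (EuclideanSpace.single q.1 1) p.1 * UB (EuclideanSpace.single q.2 1) p.2 *
        reorder (tens (embezState n)
          (tens (EuclideanSpace.single (0:Fin (2^m)) 1)
            (EuclideanSpace.single (0:Fin (2^m)) 1))) q) = _
  simp only [hw, Finset.mul_sum]
  rw [Finset.sum_comm]
  refine Finset.sum_congr rfl fun j _ => ?_
  rw [Finset.sum_eq_single ((j,(0:Fin (2^m))),(j,(0:Fin (2^m))))]
  · rw [if_pos rfl, mul_one]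
    show UA (EuclideanSpace.single (j,(0:Fin (2^m))) 1) p.1 *
        UB (EuclideanSpace.single (j,(0:Fin (2^m))) 1) p.2 * c j = _
    rw [hA j, hB j]
    show gA j p.1 * gB j p.2 * c j = c j * (gA j p.1 * gB j p.2)
    ring
  · intro q _ hq
    rw [if_neg hq, mul_zero, mul_zero]
  · intro h; exact absurd (Finset.mem_univ _) h


/-- **Local preparation of the embezzled state.**
Given orthonormal families `θ, θ'` in `ℂ^{2^m}` and an injective map `r ↦ (j_r, i_r)`,
there are local unitaries `U_A, U_B` on `ℂ^{2^n} ⊗ ℂ^{2^m}` with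
`U_A (e_r ⊗ e_1) = e_{j_r} ⊗ θ_{i_r}` and `U_B (e_r ⊗ e_1) = e_{j_r} ⊗ θ'_{i_r}`, and
consequently `(U_A ⊗ U_B) (Φ (μ_n ⊗ e_1 ⊗ e_1)) = (1/C_n) ∑_r (1/√r) (e_{j_r} ⊗ θ_{i_r}) ⊗
(e_{j_r} ⊗ θ'_{i_r})`.  (The first basis vector `e_1` is `EuclideanSpace.single 0 1`.) -/
theorem local_preparation_of_embezzled_state (n m : ℕ) (hn : 0 < n) (hm : 0 < m)
    (θ θ' : Fin (2 ^ m) → EuclideanSpace ℂ (Fin (2 ^ m)))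
    (hθ : Orthonormal ℂ θ) (hθ' : Orthonormal ℂ θ')
    (f : Fin (2 ^ n) → Fin (2 ^ n) × Fin (2 ^ m)) (hf : Function.Injective f) :
    ∃ (UA UB : EuclideanSpace ℂ (Fin (2 ^ n) × Fin (2 ^ m)) ≃ₗᵢ[ℂ]
        EuclideanSpace ℂ (Fin (2 ^ n) × Fin (2 ^ m))),
      (∀ r : Fin (2 ^ n),
        UA (tens (EuclideanSpace.single r 1) (EuclideanSpace.single 0 1)) =
          tens (EuclideanSpace.single (f r).1 1) (θ (f r).2)) ∧
      (∀ r : Fin (2 ^ n),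
        UB (tens (EuclideanSpace.single r 1) (EuclideanSpace.single 0 1)) =
          tens (EuclideanSpace.single (f r).1 1) (θ' (f r).2)) ∧
      kron UA UB (reorder (tens (embezState n)
          (tens (EuclideanSpace.single (0 : Fin (2 ^ m)) 1)
            (EuclideanSpace.single (0 : Fin (2 ^ m)) 1)))) =
        ∑ r : Fin (2 ^ n), ((1 / (Cconst n * Real.sqrt ((r : ℝ) + 1)) : ℝ) : ℂ) •
          tens (tens (EuclideanSpace.single (f r).1 1) (θ (f r).2))
            (tens (EuclideanSpace.single (f r).1 1) (θ' (f r).2)) :=  by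
  obtain ⟨UA, hUA⟩ := exists_unitary_single (0 : Fin (2^m))
    (fun r => tens (EuclideanSpace.single (f r).1 (1:ℂ)) (θ (f r).2))
    (orthonormal_prod_family θ hθ f hf)
  obtain ⟨UB, hUB⟩ := exists_unitary_single (0 : Fin (2^m))
    (fun r => tens (EuclideanSpace.single (f r).1 (1:ℂ)) (θ' (f r).2))
    (orthonormal_prod_family θ' hθ' f hf)
  exact ⟨UA, UB, fun r => by rw [tens_single_single]; exact hUA r,
    fun r => by rw [tens_single_single]; exact hUB r,
    kron_key n m UA UB _ _ hUA hUB⟩
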